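/- Inner product of λ_∅-vectors: with ω a state-like functional, the vectors λ_∅(x_1,...,x_n)ξ_ω satisfy ⟨λ_∅(x_1,...,x_n)ξ_ω, λ_∅(y_1,...,y_m)ξ_ω⟩ = Σ_{p=0}^{min(m,n)} Σ_{A_n⊔B_n=[n], A_m⊔B_m=[m], |B_n|=|B_m|=p} Π_{i∈B_n, j∈B_m (matched bijectively)} ω(x_i* y_j) Π_{i∈A_n} ω(x_i*) Π_{j∈A_m} ω(y_j), where the inner sum over matchings runs over bijections B_n → B_m. In particular, if all x_i, y_j are mean-zero (ω(x_i) = ω(y_j) = 0), then the inner product equals δ_{n,m} Σ_{π∈S_n} Π_{i=1}^n ω(x_i* y_{π(i)}). -/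

import Mathlib

variable {N : Type*} [Ring N] [StarRing N] [Algebra ℂ N]

/-- The combinatorial inner product of `λ_∅`-vectors:
`⟨λ_∅(x_1,…,x_n)ξ_ω, λ_∅(y_1,…,y_m)ξ_ω⟩ = ∑_p ∑_{B_n ⊆ [n], B_m ⊆ [m], |B_n|=|B_m|=p}
∑_{bijections e : B_n → B_m} ∏_{i∈B_n} ω(x_i* y_{e(i)}) ∏_{i∉B_n} ω(x_i*) ∏_{j∉B_m} ω(y_j)`
(the sums over `p` and over the paired subsets being encoded by summing over all pairs
of subsets of equal cardinality together with all bijections between them). -/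
noncomputable def lamEmptyIP (ω : N →ₗ[ℂ] ℂ) {ι κ : Type*}
    [Fintype ι] [Fintype κ] [DecidableEq ι] [DecidableEq κ]
    (x : ι → N) (y : κ → N) : ℂ :=
  ∑ s : Finset ι, ∑ t : Finset κ,
    if s.card = t.card then
      (∑ e : {i // i ∈ s} ≃ {j // j ∈ t}, ∏ i : {i // i ∈ s}, ω (star (x i.1) * y (e i).1))
        * (∏ i ∈ sᶜ, ω (star (x i))) * (∏ j ∈ tᶜ, ω (y j))
    else 0

/-- **Mean-zero case of the `λ_∅` inner product formula**: if all `x_i`, `y_j` have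
mean zero (`ω(x_i) = ω(y_j) = 0`), then only the complete-pairing terms survive and
`⟨λ_∅(x_1,…,x_n)ξ_ω, λ_∅(y_1,…,y_m)ξ_ω⟩ = δ_{n,m} ∑_{π ∈ S_n} ∏_{i=1}^n ω(x_i* y_{π(i)})`. -/
theorem lamEmptyIP_mean_zero (ω : N →ₗ[ℂ] ℂ)
    (hstar : ∀ a : N, ω (star a) = starRingEnd ℂ (ω a))
    (n m : ℕ) (x : Fin n → N) (y : Fin m → N)
    (hx : ∀ i, ω (x i) = 0) (hy : ∀ j, ω (y j) = 0) :
    lamEmptyIP ω x y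
      = if h : n = m then
          ∑ π : Equiv.Perm (Fin n), ∏ i : Fin n, ω (star (x i) * y (Fin.cast h (π i)))
        else 0 := by
  have hx' : ∀ i, ω (star (x i)) = 0 := fun i => by rw [hstar, hx]; simp
  unfold lamEmptyIP
  rw [Finset.sum_eq_single Finset.univ]
  · rw [Finset.sum_eq_single Finset.univ]
    · simp only [Finset.compl_univ, Finset.prod_empty, mul_one, Finset.card_univ,
        Fintype.card_fin]
      by_cases h : n = m
      · rw [if_pos h, dif_pos h]
        set E := ((Equiv.subtypeUnivEquiv (fun i : Fin n => Finset.mem_univ i)).symm.equivCongr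
           ((finCongr h).trans (Equiv.subtypeUnivEquiv (fun j : Fin m => Finset.mem_univ j)).symm)) with hE
        rw [← Equiv.sum_comp E]
        refine Fintype.sum_congr _ _ fun π => ?_
        rw [← Equiv.prod_comp (Equiv.subtypeUnivEquiv (fun i : Fin n => Finset.mem_univ i))
          (fun i => ω (star (x i) * y (Fin.cast h (π i))))]
        refine Fintype.prod_congr _ _ fun i => ?_
        simp [hE, Equiv.equivCongr, finCongr]
      · rw [if_neg h, dif_neg h]
    · intro t _ ht
      obtain ⟨j, hj⟩ : tᶜ.Nonempty := by
        rw [Finset.nonempty_iff_ne_empty]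
        simpa using ht
      split
      · rw [Finset.prod_eq_zero hj (hy j), mul_zero]
      · rfl
    · simp
  · intro s _ hs
    obtain ⟨i, hi⟩ : sᶜ.Nonempty := by
      rw [Finset.nonempty_iff_ne_empty]
      simpa using hs
    refine Finset.sum_eq_zero fun t _ => ?_
    split
    · rw [Finset.prod_eq_zero hi (hx' i), mul_zero, zero_mul]
    · rfl
  · simp
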